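/- Fix a ∈ ℝ and define R(b) = γ1 A1(b) e^{γ1 a} + γ2 A2(b) e^{γ2 a} − γ3 A3(b) e^{−γ3 a}. Then for every b ∈ ℝ, R′(b) = [γ1 C1 e^{−γ1(b−a)} + γ2 C2 e^{−γ2(b−a)} + γ3 C3 e^{γ3(b−a)}]·(−η γ1 γ2 γ3 b + Y), where C1 = (r/η²)(η−γ1)/((γ3+γ1)(γ2−γ1)) > 0, C2 = (r/η²)(γ2−η)/((γ3+γ2)(γ2−γ1)) > 0, C3 = (r/η²)(η+γ3)/((γ3+γ1)(γ3+γ2)) > 0 and Y = −γ1γ2γ3 + η(−γ1γ2 + γ2γ3 + γ1γ3). Consequently R is strictly increasing on (−∞, b*] and strictly decreasing on [b*, ∞), where b* = Y/(η γ1 γ2 γ3), and R(b) → −∞ as b → ∞. -/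

import Mathlib

open Filter Real Topology

private lemma exp_decay_aux (k : ℝ) (hk : 0 < k) :
    Tendsto (fun b : ℝ => Real.exp (-k*b)) atTop (𝓝 0) := by
  apply Real.tendsto_exp_atBot.comp
  have h : Tendsto (fun b : ℝ => k * b) atTop atTop := tendsto_id.const_mul_atTop hk
  have := tendsto_neg_atTop_atBot.comp h
  refine this.congr fun b => ?_
  simp [Function.comp]

private lemma lin_exp_decay_aux (k : ℝ) (hk : 0 < k) :
    Tendsto (fun b : ℝ => b * Real.exp (-k*b)) atTop (𝓝 0) := by
  have h := (Real.tendsto_pow_mul_exp_neg_atTop_nhds_zero 1).comp (tendsto_id.const_mul_atTop hk)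
  have h2 := h.const_mul k⁻¹
  rw [mul_zero] at h2
  refine h2.congr fun b => ?_
  simp only [Function.comp, pow_one, id]
  rw [← neg_mul]
  field_simp

private lemma term_decay_aux (c m p k : ℝ) (hk : 0 < k) :
    Tendsto (fun b : ℝ => c * ((m*b+p) * Real.exp (-k*b))) atTop (𝓝 0) := by
  have h1 := (lin_exp_decay_aux k hk).const_mul (c*m)
  have h2 := (exp_decay_aux k hk).const_mul (c*p)
  rw [mul_zero] at h1 h2
  have := h1.add h2
  rw [add_zero] at this
  refine this.congr fun b => ?_
  ring

private lemma hasDerivAt_aux (c m p k b : ℝ) :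
    HasDerivAt (fun x => c * ((m*x+p) * Real.exp (k*x)))
      (c * ((m + k*(m*b+p)) * Real.exp (k*b))) b := by
  have h1 : HasDerivAt (fun x : ℝ => m*x+p) m b := by
    simpa using ((hasDerivAt_id b).const_mul m).add_const p
  have h2 : HasDerivAt (fun x : ℝ => Real.exp (k*x)) (Real.exp (k*b)*k) b := by
    simpa using (((hasDerivAt_id b).const_mul k).exp)
  have := (h1.mul h2).const_mul c
  exact this.congr_deriv (by ring)

set_option maxHeartbeats 1000000 in
/-- Derivative formula for `R`, positivity of `C1, C2, C3`, strict monotonicity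
of `R` on `(-∞, b*]`, strict antitonicity on `[b*, ∞)`, and `R(b) → -∞` as `b → ∞`. -/
theorem stmt_5 (η γ1 γ2 γ3 r : ℝ)
    (h1 : 0 < γ1) (h2 : γ1 < η) (h3 : η < γ2) (h4 : 0 < γ3) (hr : 0 < r)
    (A1 A2 A3 : ℝ → ℝ)
    (hA1 : ∀ b : ℝ, A1 b = r / η ^ 2 *
      ((η - γ1) * (γ2 * γ3 * (η * b + 1) + η * (γ2 - γ3)) / ((γ3 + γ1) * (γ2 - γ1))) *
      Real.exp (-γ1 * b))
    (hA2 : ∀ b : ℝ, A2 b = r / η ^ 2 *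
      ((γ2 - η) * (γ1 * γ3 * (η * b + 1) + η * (γ1 - γ3)) / ((γ3 + γ2) * (γ2 - γ1))) *
      Real.exp (-γ2 * b))
    (hA3 : ∀ b : ℝ, A3 b = r / η ^ 2 *
      ((η + γ3) * (γ1 * γ2 * (η * b + 1) - η * (γ1 + γ2)) / ((γ3 + γ1) * (γ2 + γ3))) *
      Real.exp (γ3 * b))
    (a : ℝ) (R : ℝ → ℝ)
    (hR : ∀ b : ℝ, R b = γ1 * A1 b * Real.exp (γ1 * a) + γ2 * A2 b * Real.exp (γ2 * a)
      - γ3 * A3 b * Real.exp (-γ3 * a))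
    (C1 C2 C3 Y bstar : ℝ)
    (hC1 : C1 = r / η ^ 2 * ((η - γ1) / ((γ3 + γ1) * (γ2 - γ1))))
    (hC2 : C2 = r / η ^ 2 * ((γ2 - η) / ((γ3 + γ2) * (γ2 - γ1))))
    (hC3 : C3 = r / η ^ 2 * ((η + γ3) / ((γ3 + γ1) * (γ3 + γ2))))
    (hY : Y = -(γ1 * γ2 * γ3) + η * (-(γ1 * γ2) + γ2 * γ3 + γ1 * γ3))
    (hbstar : bstar = Y / (η * γ1 * γ2 * γ3)) :
    0 < C1 ∧ 0 < C2 ∧ 0 < C3 ∧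
    (∀ b : ℝ, HasDerivAt R
      ((γ1 * C1 * Real.exp (-γ1 * (b - a)) + γ2 * C2 * Real.exp (-γ2 * (b - a))
        + γ3 * C3 * Real.exp (γ3 * (b - a))) * (-(η * γ1 * γ2 * γ3 * b) + Y)) b) ∧
    StrictMonoOn R (Set.Iic bstar) ∧ StrictAntiOn R (Set.Ici bstar) ∧
    Filter.Tendsto R Filter.atTop Filter.atBot := by
  have hη : 0 < η := h1.trans h2
  have hγ2 : 0 < γ2 := hη.trans h3
  have hη2 : (0:ℝ) < η ^ 2 := by positivity
  have h31 : 0 < γ3 + γ1 := by linarith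
  have h21 : 0 < γ2 - γ1 := by linarith
  have h32 : 0 < γ3 + γ2 := by linarith
  have h23 : 0 < γ2 + γ3 := by linarith
  have hc1pos : 0 < C1 := by
    rw [hC1]
    have : 0 < η - γ1 := by linarith
    positivity
  have hc2pos : 0 < C2 := by
    rw [hC2]
    have : 0 < γ2 - η := by linarith
    positivity
  have hc3pos : 0 < C3 := by
    rw [hC3]
    have : 0 < η + γ3 := by linarith
    positivity
  -- canonical form of R
  set c1 : ℝ := γ1 * (r / η ^ 2) * ((η - γ1) / ((γ3 + γ1) * (γ2 - γ1))) * Real.exp (γ1 * a)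
    with hc1
  set c2 : ℝ := γ2 * (r / η ^ 2) * ((γ2 - η) / ((γ3 + γ2) * (γ2 - γ1))) * Real.exp (γ2 * a)
    with hc2
  set c3 : ℝ := γ3 * (r / η ^ 2) * ((η + γ3) / ((γ3 + γ1) * (γ2 + γ3))) * Real.exp (-γ3 * a)
    with hc3
  have hfun : R = fun b =>
      c1 * ((η * γ2 * γ3 * b + (γ2 * γ3 + η * (γ2 - γ3))) * Real.exp (-γ1 * b))
      + c2 * ((η * γ1 * γ3 * b + (γ1 * γ3 + η * (γ1 - γ3))) * Real.exp (-γ2 * b))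
      - c3 * ((η * γ1 * γ2 * b + (γ1 * γ2 - η * (γ1 + γ2))) * Real.exp (γ3 * b)) := by
    funext b
    rw [hR, hA1, hA2, hA3, hc1, hc2, hc3]
    ring
  -- derivative in canonical form
  have hder : ∀ b : ℝ, HasDerivAt R
      (c1 * ((η * γ2 * γ3 + (-γ1) * (η * γ2 * γ3 * b + (γ2 * γ3 + η * (γ2 - γ3))))
          * Real.exp (-γ1 * b))
      + c2 * ((η * γ1 * γ3 + (-γ2) * (η * γ1 * γ3 * b + (γ1 * γ3 + η * (γ1 - γ3))))
          * Real.exp (-γ2 * b))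
      - c3 * ((η * γ1 * γ2 + γ3 * (η * γ1 * γ2 * b + (γ1 * γ2 - η * (γ1 + γ2))))
          * Real.exp (γ3 * b))) b := by
    intro b
    rw [hfun]
    exact ((hasDerivAt_aux c1 _ _ (-γ1) b).add (hasDerivAt_aux c2 _ _ (-γ2) b)).sub
      (hasDerivAt_aux c3 _ _ γ3 b)
  -- identify with the stated derivative
  have key : ∀ b : ℝ,
      (γ1 * C1 * Real.exp (-γ1 * (b - a)) + γ2 * C2 * Real.exp (-γ2 * (b - a))
        + γ3 * C3 * Real.exp (γ3 * (b - a))) * (-(η * γ1 * γ2 * γ3 * b) + Y)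
      = c1 * ((η * γ2 * γ3 + (-γ1) * (η * γ2 * γ3 * b + (γ2 * γ3 + η * (γ2 - γ3))))
          * Real.exp (-γ1 * b))
      + c2 * ((η * γ1 * γ3 + (-γ2) * (η * γ1 * γ3 * b + (γ1 * γ3 + η * (γ1 - γ3))))
          * Real.exp (-γ2 * b))
      - c3 * ((η * γ1 * γ2 + γ3 * (η * γ1 * γ2 * b + (γ1 * γ2 - η * (γ1 + γ2))))
          * Real.exp (γ3 * b)) := by
    intro b
    have e1 : Real.exp (-γ1 * (b - a)) = Real.exp (γ1 * a) * Real.exp (-γ1 * b) := by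
      rw [← Real.exp_add]; congr 1; ring
    have e2 : Real.exp (-γ2 * (b - a)) = Real.exp (γ2 * a) * Real.exp (-γ2 * b) := by
      rw [← Real.exp_add]; congr 1; ring
    have e3 : Real.exp (γ3 * (b - a)) = Real.exp (-γ3 * a) * Real.exp (γ3 * b) := by
      rw [← Real.exp_add]; congr 1; ring
    rw [e1, e2, e3, hC1, hC2, hC3, hY, hc1, hc2, hc3]
    field_simp
    ring
  have hd : ∀ b : ℝ, HasDerivAt R
      ((γ1 * C1 * Real.exp (-γ1 * (b - a)) + γ2 * C2 * Real.exp (-γ2 * (b - a))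
        + γ3 * C3 * Real.exp (γ3 * (b - a))) * (-(η * γ1 * γ2 * γ3 * b) + Y)) b := by
    intro b
    rw [key b]
    exact hder b
  refine ⟨hc1pos, hc2pos, hc3pos, hd, ?_, ?_, ?_⟩
  · -- StrictMonoOn on Iic bstar
    have hcont : Continuous R := by
      rw [hfun]; fun_prop
    refine strictMonoOn_of_deriv_pos (convex_Iic bstar) hcont.continuousOn ?_
    intro x hx
    rw [interior_Iic, Set.mem_Iio] at hx
    rw [(hd x).deriv]
    have hsum : 0 < γ1 * C1 * Real.exp (-γ1 * (x - a)) + γ2 * C2 * Real.exp (-γ2 * (x - a))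
        + γ3 * C3 * Real.exp (γ3 * (x - a)) := by positivity
    have hK : 0 < η * γ1 * γ2 * γ3 := by positivity
    have : 0 < -(η * γ1 * γ2 * γ3 * x) + Y := by
      rw [hbstar] at hx
      have := (lt_div_iff₀ hK).mp hx
      linarith
    exact mul_pos hsum this
  · -- StrictAntiOn on Ici bstar
    have hcont : Continuous R := by
      rw [hfun]; fun_prop
    refine strictAntiOn_of_deriv_neg (convex_Ici bstar) hcont.continuousOn ?_
    intro x hx
    rw [interior_Ici, Set.mem_Ioi] at hx
    rw [(hd x).deriv]
    have hsum : 0 < γ1 * C1 * Real.exp (-γ1 * (x - a)) + γ2 * C2 * Real.exp (-γ2 * (x - a))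
        + γ3 * C3 * Real.exp (γ3 * (x - a)) := by positivity
    have hK : 0 < η * γ1 * γ2 * γ3 := by positivity
    have : -(η * γ1 * γ2 * γ3 * x) + Y < 0 := by
      rw [hbstar] at hx
      have := (div_lt_iff₀ hK).mp hx
      linarith
    exact mul_neg_of_pos_of_neg hsum this
  · -- Tendsto atBot
    rw [hfun]
    have ht1 := term_decay_aux c1 (η * γ2 * γ3) (γ2 * γ3 + η * (γ2 - γ3)) γ1 h1
    have ht2 := term_decay_aux c2 (η * γ1 * γ3) (γ1 * γ3 + η * (γ1 - γ3)) γ2 (by linarith)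
    have h012 := ht1.add ht2
    rw [add_zero] at h012
    have hc3pos' : 0 < c3 := by
      rw [hc3]
      have : 0 < η + γ3 := by linarith
      positivity
    have hlin : Tendsto (fun b : ℝ => η * γ1 * γ2 * b + (γ1 * γ2 - η * (γ1 + γ2)))
        atTop atTop := by
      apply tendsto_atTop_add_const_right
      exact tendsto_id.const_mul_atTop (by positivity)
    have hexp : Tendsto (fun b : ℝ => Real.exp (γ3 * b)) atTop atTop :=
      Real.tendsto_exp_atTop.comp (tendsto_id.const_mul_atTop h4)
    have ht3 : Tendsto (fun b : ℝ =>
        c3 * ((η * γ1 * γ2 * b + (γ1 * γ2 - η * (γ1 + γ2))) * Real.exp (γ3 * b)))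
        atTop atTop :=
      (hlin.atTop_mul_atTop₀ hexp).const_mul_atTop hc3pos'
    have hneg : Tendsto (fun b : ℝ =>
        -(c3 * ((η * γ1 * γ2 * b + (γ1 * γ2 - η * (γ1 + γ2))) * Real.exp (γ3 * b))))
        atTop atBot := tendsto_neg_atTop_atBot.comp ht3
    simp only [sub_eq_add_neg]
    exact h012.add_atBot hneg
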